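/- Let h̃: ℝ^k → ℝ be bounded by 1 in absolute value, let φ be the standard Gaussian density, b ∈ (0,1], u ∈ ℝ^k, and a > 0. Then for any indices i, i', i'': |∫∫ h̃(b x + u + c z) φ(x) D_{ii'i''}φ(z) dx dz| ≤ c_0 k a^2, where a = c/b and c > 0, and c_0 is an absolute constant. In particular with b = √((n-1)/n) e^{-s}, c = √(1-e^{-2s}), the bound is c_0 k e^{2s}(1-e^{-2s}) (for n ≥ 2). -/

import Mathlib

open MeasureTheory

/-- Partial derivative of `f` in the `i`-th coordinate. -/
noncomputable def pd {k : ℕ} (i : Fin k) (f : (Fin k → ℝ) → ℝ) (x : Fin k → ℝ) : ℝ :=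
  deriv (fun t => f (Function.update x i t)) (x i)

/-- The standard Gaussian density on `ℝ^k`. -/
noncomputable def stdGaussianDensity (k : ℕ) (z : Fin k → ℝ) : ℝ :=
  (2 * Real.pi) ^ (-(k : ℝ) / 2) * Real.exp (-(∑ i, z i ^ 2) / 2)

open MeasureTheory Real Filter Topology

/-- 1-D standard Gaussian density. -/
noncomputable def gau : ℝ → ℝ := fun t => (2 * Real.pi) ^ (-(1:ℝ)/2) * Real.exp (-t^2/2)

/-- The iterated derivatives of `gau` up to order 3 (orders `≥ 3` are clamped to 3). -/
noncomputable def Gm : ℕ → ℝ → ℝ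
  | 0 => gau
  | 1 => fun t => (-t) * gau t
  | 2 => fun t => (t^2 - 1) * gau t
  | _ => fun t => (3*t - t^3) * gau t

lemma gau_pos (t : ℝ) : 0 < gau t := by
  have : (0:ℝ) < 2 * Real.pi := by positivity
  exact mul_pos (Real.rpow_pos_of_pos this _) (Real.exp_pos _)

lemma gau_nonneg (t : ℝ) : 0 ≤ gau t := (gau_pos t).le

lemma continuous_gau : Continuous gau := by unfold gau; fun_prop

lemma continuous_Gm (p : ℕ) : Continuous (Gm p) := by
  match p with
  | 0 => exact continuous_gau
  | 1 => exact continuous_neg.mul continuous_gau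
  | 2 => exact ((continuous_pow 2).sub continuous_const).mul continuous_gau
  | (n+3) =>
      exact ((continuous_const.mul continuous_id).sub (continuous_pow 3)).mul continuous_gau

lemma hasDerivAt_gau (t : ℝ) : HasDerivAt gau ((-t) * gau t) t := by
  have h1 : HasDerivAt (fun s : ℝ => -s^2/2) (-t) t := by
    have := ((hasDerivAt_pow 2 t).neg).div_const 2
    simpa using this.congr_deriv (by ring)
  have h2 := (h1.exp).const_mul ((2 * Real.pi) ^ (-(1:ℝ)/2))
  refine h2.congr_deriv ?_
  unfold gau; ring

lemma hasDerivAt_Gm (p : ℕ) (hp : p ≤ 2) (t : ℝ) : HasDerivAt (Gm p) (Gm (p+1) t) t := by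
  interval_cases p
  · exact hasDerivAt_gau t
  · have h := ((hasDerivAt_id t).neg).mul (hasDerivAt_gau t)
    refine h.congr_deriv ?_
    show _ = (t^2 - 1) * gau t
    simp only [Pi.neg_apply, id_eq]
    ring
  · have h := (((hasDerivAt_pow 2 t)).sub_const 1).mul (hasDerivAt_gau t)
    refine h.congr_deriv ?_
    show _ = (3*t - t^3) * gau t
    ring

lemma abs_Gm_le (p : ℕ) (hp : p ≤ 3) (t : ℝ) : |Gm p t| ≤ 8^p * Real.exp (-t^2/4) := by
  have hg : gau t ≤ Real.exp (-t^2/2) := by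
    have h1 : (2 * Real.pi) ^ (-(1:ℝ)/2) ≤ 1 :=
      Real.rpow_le_one_of_one_le_of_nonpos (by nlinarith [Real.pi_gt_three]) (by norm_num)
    calc gau t ≤ 1 * Real.exp (-t^2/2) :=
          mul_le_mul_of_nonneg_right h1 (Real.exp_pos _).le
      _ = _ := one_mul _
  have key : ∀ q c : ℝ, 0 ≤ q → q ≤ c * Real.exp (t^2/4) →
      q * gau t ≤ c * Real.exp (-t^2/4) := by
    intro q c hq hqe
    calc q * gau t ≤ (c * Real.exp (t^2/4)) * Real.exp (-t^2/2) :=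
          mul_le_mul hqe hg (gau_nonneg t) (hq.trans hqe)
      _ = c * Real.exp (-t^2/4) := by
          rw [mul_assoc, ← Real.exp_add]; ring_nf
  have h4 : 1 + t^2/4 ≤ Real.exp (t^2/4) := by
    have := Real.add_one_le_exp (t^2/4); linarith
  interval_cases p
  · show |gau t| ≤ _
    rw [abs_of_nonneg (gau_nonneg t)]
    have : gau t = 1 * gau t := (one_mul _).symm
    rw [this]
    apply key 1 _ zero_le_one
    have := Real.one_le_exp (by positivity : (0:ℝ) ≤ t^2/4)
    simpa using this
  · show |(-t) * gau t| ≤ _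
    rw [abs_mul, abs_of_nonneg (gau_nonneg t)]
    apply key _ _ (abs_nonneg _)
    rw [abs_neg]
    nlinarith [abs_nonneg t, sq_abs t]
  · show |(t^2-1) * gau t| ≤ _
    rw [abs_mul, abs_of_nonneg (gau_nonneg t)]
    apply key _ _ (abs_nonneg _)
    have : |t^2 - 1| ≤ t^2 + 1 := by
      calc |t^2-1| ≤ |t^2| + |(1:ℝ)| := abs_sub _ _
        _ = t^2 + 1 := by rw [abs_of_nonneg (sq_nonneg t)]; norm_num
    nlinarith
  · show |(3*t - t^3) * gau t| ≤ _
    rw [abs_mul, abs_of_nonneg (gau_nonneg t)]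
    apply key _ _ (abs_nonneg _)
    have h12 : (1 + t^2/12)^3 ≤ Real.exp (t^2/4) := by
      have h0 : 1 + t^2/12 ≤ Real.exp (t^2/12) := by
        have := Real.add_one_le_exp (t^2/12); linarith
      calc (1 + t^2/12)^3 ≤ (Real.exp (t^2/12))^3 := by
            apply pow_le_pow_left₀ (by positivity) h0
        _ = Real.exp (t^2/4) := by
            rw [← Real.exp_nat_mul]; congr 1; ring
    have habs : |3*t - t^3| ≤ 3*|t| + |t|^3 := by
      calc |3*t - t^3| ≤ |3*t| + |t^3| := abs_sub _ _
        _ = 3*|t| + |t|^3 := by rw [abs_mul, abs_pow]; norm_num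
    have hu := abs_nonneg t
    have hu2 := sq_abs t
    have hmain : 3*|t| + |t|^3 ≤ 512*(1+t^2/12)^3 := by
      rw [← hu2]
      nlinarith [sq_nonneg (|t|-1), sq_nonneg (|t|^2-|t|), hu, sq_nonneg (|t|^3-1),
        mul_nonneg hu (mul_nonneg hu hu)]
    nlinarith [h12]

lemma abs_Gm_le_const (p : ℕ) (hp : p ≤ 3) (t : ℝ) : |Gm p t| ≤ 8^p := by
  have h := abs_Gm_le p hp t
  have he : Real.exp (-t^2/4) ≤ 1 := by
    rw [show -t^2/4 = -(t^2/4) by ring]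
    exact Real.exp_le_one_iff.mpr (neg_nonpos.mpr (by positivity))
  have h8 : (0:ℝ) < 8^p := by positivity
  nlinarith

lemma integrable_expq : Integrable (fun t : ℝ => Real.exp (-t^2/4)) := by
  have h := integrable_exp_neg_mul_sq (by norm_num : (0:ℝ) < 1/4)
  have : (fun t : ℝ => Real.exp (-t^2/4)) = fun t : ℝ => Real.exp (-(1/4) * t^2) := by
    funext t; ring_nf
  rw [this]; exact h

lemma integrable_Gm (p : ℕ) (hp : p ≤ 3) : Integrable (Gm p) :=
  (integrable_expq.const_mul ((8:ℝ)^p)).mono' (continuous_Gm p).aestronglyMeasurable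
    (Filter.Eventually.of_forall fun t => by
      simpa [Real.norm_eq_abs] using abs_Gm_le p hp t)

lemma integral_gau : ∫ t, gau t = 1 := by
  unfold gau
  rw [MeasureTheory.integral_const_mul]
  have h : ∫ t : ℝ, Real.exp (-t^2/2) = Real.sqrt (2*Real.pi) := by
    have h2 := integral_gaussian (1/2)
    have : (fun t : ℝ => Real.exp (-t^2/2)) = fun t : ℝ => Real.exp (-(1/2) * t^2) := by
      funext t; ring_nf
    rw [this, h2]
    congr 1; ring
  rw [h, Real.sqrt_eq_rpow, ← Real.rpow_add (by positivity)]
  norm_num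

lemma integral_expq_le : ∫ t : ℝ, Real.exp (-t^2/4) ≤ 4 := by
  have h2 := integral_gaussian (1/4)
  have : (fun t : ℝ => Real.exp (-t^2/4)) = fun t : ℝ => Real.exp (-(1/4) * t^2) := by
    funext t; ring_nf
  rw [this, h2]
  rw [show Real.pi / (1/4) = 4 * Real.pi by ring]
  calc Real.sqrt (4*Real.pi) ≤ Real.sqrt 16 := by
        apply Real.sqrt_le_sqrt; nlinarith [Real.pi_le_four]
    _ = 4 := by rw [show (16:ℝ) = 4^2 by norm_num, Real.sqrt_sq (by norm_num : (0:ℝ) ≤ 4)]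

lemma integral_abs_Gm (p : ℕ) (hp : p ≤ 3) : ∫ t, |Gm p t| ≤ 32^p := by
  rcases Nat.eq_zero_or_pos p with h0 | h1
  · subst h0
    have : ∀ t, |Gm 0 t| = gau t := fun t => abs_of_nonneg (gau_nonneg t)
    simp only [this, integral_gau, pow_zero, le_refl]
  · have hint : ∫ t, |Gm p t| ≤ ∫ t : ℝ, 8^p * Real.exp (-t^2/4) := by
      apply integral_mono ((integrable_Gm p hp).abs) (integrable_expq.const_mul _)
      exact fun t => abs_Gm_le p hp t
    rw [MeasureTheory.integral_const_mul] at hint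
    have h4 : (8:ℝ)^p * (∫ t : ℝ, Real.exp (-t^2/4)) ≤ 8^p * 4 := by
      apply mul_le_mul_of_nonneg_left integral_expq_le (by positivity)
    have hp4 : (8:ℝ)^p * 4 ≤ 32^p := by
      rw [show (32:ℝ)^p = 8^p * 4^p by rw [← mul_pow]; norm_num]
      have : (4:ℝ) ≤ 4^p := by
        calc (4:ℝ) = 4^1 := by norm_num
          _ ≤ 4^p := pow_le_pow_right₀ (by norm_num) h1
      nlinarith [pow_pos (show (0:ℝ) < 8 by norm_num) p]
    linarith

lemma tendsto_expq_atTop : Filter.Tendsto (fun t : ℝ => Real.exp (-t^2/4)) atTop (𝓝 0) := by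
  apply Real.tendsto_exp_atBot.comp
  have h1 : Tendsto (fun t : ℝ => t^2) atTop atTop := tendsto_pow_atTop (by norm_num)
  have h2 : Tendsto (fun t : ℝ => t^2/4) atTop atTop := h1.atTop_div_const (by norm_num)
  exact (tendsto_neg_atTop_atBot.comp h2).congr fun t => by
    simp only [Function.comp_apply]; ring

lemma tendsto_expq_atBot : Filter.Tendsto (fun t : ℝ => Real.exp (-t^2/4)) atBot (𝓝 0) := by
  apply Real.tendsto_exp_atBot.comp
  have h1 : Tendsto (fun t : ℝ => t^2) atBot atTop := by
    have habs : Tendsto (fun t : ℝ => |t|) atBot atTop := tendsto_abs_atBot_atTop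
    have := (tendsto_pow_atTop (show 2 ≠ 0 by norm_num)).comp habs
    refine this.congr fun t => ?_
    simp [sq_abs]
  have h2 : Tendsto (fun t : ℝ => t^2/4) atBot atTop := h1.atTop_div_const (by norm_num)
  exact (tendsto_neg_atTop_atBot.comp h2).congr fun t => by
    simp only [Function.comp_apply]; ring

lemma integrable_GmGm (p n : ℕ) (hp : p ≤ 3) (hn : n ≤ 3) (a y : ℝ) :
    Integrable (fun t => Gm p t * Gm n (y - a*t)) := by
  apply (integrable_expq.const_mul ((8:ℝ)^p * 8^n)).mono'
  · exact ((continuous_Gm p).mul ((continuous_Gm n).comp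
      (continuous_const.sub (continuous_const.mul continuous_id)))).aestronglyMeasurable
  · refine Filter.Eventually.of_forall fun t => ?_
    rw [Real.norm_eq_abs, abs_mul]
    calc |Gm p t| * |Gm n (y - a*t)| ≤ (8^p * Real.exp (-t^2/4)) * 8^n := by
          apply mul_le_mul (abs_Gm_le p hp t) (abs_Gm_le_const n hn _) (abs_nonneg _)
            (by positivity)
      _ = 8^p * 8^n * Real.exp (-t^2/4) := by ring

lemma tendsto_GmGm (p n : ℕ) (hp : p ≤ 3) (hn : n ≤ 3) (a y : ℝ) (l : Filter ℝ)
    (hl : Filter.Tendsto (fun t : ℝ => Real.exp (-t^2/4)) l (𝓝 0)) :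
    Filter.Tendsto (fun t => Gm p t * Gm n (y - a*t)) l (𝓝 0) := by
  apply squeeze_zero_norm (a := fun t => (8^p * 8^n) * Real.exp (-t^2/4))
  · intro t
    rw [Real.norm_eq_abs, abs_mul]
    calc |Gm p t| * |Gm n (y - a*t)| ≤ (8^p * Real.exp (-t^2/4)) * 8^n := by
          apply mul_le_mul (abs_Gm_le p hp t) (abs_Gm_le_const n hn _) (abs_nonneg _)
            (by positivity)
      _ = 8^p * 8^n * Real.exp (-t^2/4) := by ring
  · simpa using hl.const_mul ((8:ℝ)^p * 8^n)

lemma ibp_step (p n : ℕ) (hp : p ≤ 2) (hn : n ≤ 2) (a y : ℝ) :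
    ∫ t, Gm (p+1) t * Gm n (y - a*t) = a * ∫ t, Gm p t * Gm (n+1) (y - a*t) := by
  have hu : ∀ t : ℝ, HasDerivAt (Gm p) (Gm (p+1) t) t := hasDerivAt_Gm p hp
  have hv : ∀ t : ℝ, HasDerivAt (fun s => Gm n (y - a*s)) ((-a) * Gm (n+1) (y - a*t)) t := by
    intro t
    have hinner : HasDerivAt (fun s : ℝ => y - a*s) (-a) t := by
      simpa using ((hasDerivAt_id t).const_mul a).const_sub y
    have := (hasDerivAt_Gm n hn (y - a*t)).comp t hinner
    exact this.congr_deriv (by ring)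
  have huv' : Integrable ((Gm p) * fun t => (-a) * Gm (n+1) (y - a*t)) := by
    have h1 := (integrable_GmGm p (n+1) (by omega) (by omega) a y).const_mul (-a)
    exact h1.congr (Filter.Eventually.of_forall fun t => by
      show _ = Gm p t * ((-a) * Gm (n+1) (y - a*t)); ring)
  have hu'v : Integrable ((Gm (p+1)) * fun t => Gm n (y - a*t)) :=
    integrable_GmGm (p+1) n (by omega) (by omega) a y
  have hbot : Filter.Tendsto ((Gm p) * fun t => Gm n (y - a*t)) atBot (𝓝 0) :=
    tendsto_GmGm p n (by omega) (by omega) a y _ tendsto_expq_atBot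
  have htop : Filter.Tendsto ((Gm p) * fun t => Gm n (y - a*t)) atTop (𝓝 0) :=
    tendsto_GmGm p n (by omega) (by omega) a y _ tendsto_expq_atTop
  have H := integral_mul_deriv_eq_deriv_mul (fun t _ => hu t) (fun t _ => hv t) huv' hu'v hbot htop
  have hrw : ∀ t : ℝ, Gm p t * ((-a) * Gm (n+1) (y - a*t))
      = (-a) * (Gm p t * Gm (n+1) (y - a*t)) := fun t => by ring
  simp_rw [hrw] at H
  rw [MeasureTheory.integral_const_mul] at H
  linarith [H]

lemma key_ibp (p : ℕ) : ∀ n, p + n ≤ 3 → ∀ a y : ℝ,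
    ∫ t, Gm p t * Gm n (y - a*t) = a^p * ∫ t, gau t * Gm (p+n) (y - a*t) := by
  induction p with
  | zero => intro n hn a y; simp [Gm]
  | succ p ih =>
      intro n hn a y
      have h1 : ∫ t, Gm (p+1) t * Gm n (y - a*t) = a * ∫ t, Gm p t * Gm (n+1) (y - a*t) :=
        ibp_step p n (by omega) (by omega) a y
      rw [h1, ih (n+1) (by omega) a y, show p + (n+1) = p + 1 + n by omega]
      ring

/-- Product of shifted 1-D Hermite-Gaussians over coordinates. -/
noncomputable def prodGm {k : ℕ} (m : Fin k → ℕ) : (Fin k → ℝ) → ℝ :=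
  fun z => ∏ j, Gm (m j) (z j)

lemma gauss_prod (k : ℕ) : stdGaussianDensity k = fun z => ∏ j, gau (z j) := by
  funext z
  unfold stdGaussianDensity gau
  rw [Finset.prod_mul_distrib, Finset.prod_const, ← Real.exp_sum]
  congr 1
  · rw [← Real.rpow_natCast ((2*Real.pi) ^ (-(1:ℝ)/2)) (Finset.univ.card),
      ← Real.rpow_mul (by positivity)]
    congr 1
    simp [Finset.card_univ]
    ring
  · congr 1
    rw [← Finset.sum_div]
    congr 1
    rw [Finset.sum_neg_distrib]

lemma pd_prodGm {k : ℕ} (m : Fin k → ℕ) (hm : ∀ j, m j ≤ 2) (j₀ : Fin k) :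
    pd j₀ (prodGm m) = prodGm (Function.update m j₀ (m j₀ + 1)) := by
  funext x
  unfold pd
  have h1 : (fun t => prodGm m (Function.update x j₀ t))
      = fun t => Gm (m j₀) t * ∏ j ∈ Finset.univ.erase j₀, Gm (m j) (x j) := by
    funext t
    unfold prodGm
    rw [← Finset.mul_prod_erase _ _ (Finset.mem_univ j₀)]
    congr 1
    · rw [Function.update_self]
    · exact Finset.prod_congr rfl fun j hj => by
        rw [Function.update_of_ne (Finset.ne_of_mem_erase hj)]
  rw [h1, deriv_mul_const ((hasDerivAt_Gm (m j₀) (hm j₀) _).differentiableAt)]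
  rw [(hasDerivAt_Gm (m j₀) (hm j₀) _).deriv]
  unfold prodGm
  rw [← Finset.mul_prod_erase _ _ (Finset.mem_univ j₀), Function.update_self]
  congr 1
  exact Finset.prod_congr rfl fun j hj => by
    rw [Function.update_of_ne (Finset.ne_of_mem_erase hj)]

lemma sum_update_succ {k : ℕ} (m : Fin k → ℕ) (j : Fin k) :
    ∑ l, Function.update m j (m j + 1) l = (∑ l, m l) + 1 := by
  rw [Finset.sum_update_of_mem (Finset.mem_univ j), Finset.sdiff_singleton_eq_erase]
  rw [← Finset.add_sum_erase _ m (Finset.mem_univ j)]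
  omega

lemma update_le {k : ℕ} (m : Fin k → ℕ) (j : Fin k) (v s : ℕ) (hm : ∀ l, m l ≤ s) (hv : v ≤ s) :
    ∀ l, Function.update m j v l ≤ s := by
  intro l
  rcases eq_or_ne l j with h | h
  · subst h; rw [Function.update_self]; exact hv
  · rw [Function.update_of_ne h]; exact hm l

lemma psd_repr {k : ℕ} (i i' i'' : Fin k) :
    ∃ m : Fin k → ℕ, (∑ j, m j) = 3 ∧ (∀ j, m j ≤ 3) ∧
      pd i (pd i' (pd i'' (stdGaussianDensity k))) = prodGm m := by
  have h0 : stdGaussianDensity k = prodGm (fun _ => 0) := by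
    rw [gauss_prod]; rfl
  set m0 : Fin k → ℕ := fun _ => 0 with hm0
  set m1 := Function.update m0 i'' (m0 i'' + 1) with hm1
  set m2 := Function.update m1 i' (m1 i' + 1) with hm2
  set m3 := Function.update m2 i (m2 i + 1) with hm3
  have hs0 : ∑ l, m0 l = 0 := by simp [hm0]
  have hs1 : ∑ l, m1 l = 1 := by rw [hm1, sum_update_succ, hs0]
  have hs2 : ∑ l, m2 l = 2 := by rw [hm2, sum_update_succ, hs1]
  have hs3 : ∑ l, m3 l = 3 := by rw [hm3, sum_update_succ, hs2]
  have hb : ∀ (m : Fin k → ℕ) (s : ℕ), (∑ l, m l) = s → ∀ l, m l ≤ s := by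
    intro m s hsum l
    rw [← hsum]
    exact Finset.single_le_sum (fun _ _ => Nat.zero_le _) (Finset.mem_univ l)
  refine ⟨m3, hs3, hb m3 3 hs3, ?_⟩
  rw [h0, pd_prodGm m0 (fun j => by simp [hm0]) i'', ← hm1,
    pd_prodGm m1 (fun j => by have := hb m1 1 hs1 j; omega) i', ← hm2,
    pd_prodGm m2 (fun j => by have := hb m2 2 hs2 j; omega) i, ← hm3]

lemma continuous_prodGm {k : ℕ} (m : Fin k → ℕ) : Continuous (prodGm m) :=
  continuous_finset_prod _ fun j _ => (continuous_Gm (m j)).comp (continuous_apply j)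

lemma integrable_prodGm {k : ℕ} (m : Fin k → ℕ) (hm : ∀ j, m j ≤ 3) :
    Integrable (prodGm m) :=
  Integrable.fintype_prod (f := fun j => Gm (m j)) fun j => integrable_Gm _ (hm j)

lemma abs_prodGm_le {k : ℕ} (m : Fin k → ℕ) (hm : ∀ j, m j ≤ 3) (z : Fin k → ℝ) :
    |prodGm m z| ≤ 8 ^ (∑ j, m j) := by
  unfold prodGm
  rw [Finset.abs_prod]
  calc ∏ j, |Gm (m j) (z j)| ≤ ∏ j, (8:ℝ) ^ (m j) :=
        Finset.prod_le_prod (fun j _ => abs_nonneg _) (fun j _ => abs_Gm_le_const _ (hm j) _)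
    _ = 8 ^ (∑ j, m j) := Finset.prod_pow_eq_pow_sum _ _ _

lemma integral_abs_prodGm {k : ℕ} (m : Fin k → ℕ) (hm : ∀ j, m j ≤ 3) :
    ∫ z, |prodGm m z| ≤ 32 ^ (∑ j, m j) := by
  have h1 : (fun z : Fin k → ℝ => |prodGm m z|) = fun z => ∏ j, |Gm (m j) (z j)| := by
    funext z; unfold prodGm; rw [Finset.abs_prod]
  rw [h1, MeasureTheory.integral_fintype_prod_volume_eq_prod (f := fun j t => |Gm (m j) t|)]
  calc ∏ j, ∫ t, |Gm (m j) t| ≤ ∏ j, (32:ℝ) ^ (m j) :=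
        Finset.prod_le_prod (fun j _ => integral_nonneg fun t => abs_nonneg _)
          (fun j _ => integral_abs_Gm _ (hm j))
    _ = 32 ^ (∑ j, m j) := Finset.prod_pow_eq_pow_sum _ _ _

lemma stdG_nonneg {k : ℕ} (x : Fin k → ℝ) : 0 ≤ stdGaussianDensity k x := by
  rw [gauss_prod]; exact Finset.prod_nonneg fun j _ => gau_nonneg _

lemma continuous_stdG {k : ℕ} : Continuous (stdGaussianDensity k) := by
  rw [gauss_prod]; exact continuous_finset_prod _ fun j _ => continuous_gau.comp (continuous_apply j)

lemma integrable_stdG {k : ℕ} : Integrable (stdGaussianDensity k) := by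
  rw [gauss_prod]
  exact Integrable.fintype_prod (f := fun _ => gau) fun j => integrable_Gm 0 (by norm_num)

lemma integral_stdG {k : ℕ} : ∫ x : Fin k → ℝ, stdGaussianDensity k x = 1 := by
  rw [gauss_prod, MeasureTheory.integral_fintype_prod_volume_eq_prod (f := fun _ => gau)]
  simp [integral_gau]

lemma core_bound {k : ℕ} (h : (Fin k → ℝ) → ℝ) (b c : ℝ) (u : Fin k → ℝ)
    (i i' i'' : Fin k) (hh : Measurable h) (hb1 : ∀ x, |h x| ≤ 1)
    (hb0 : 0 < b) (hc0 : 0 < c) :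
    |∫ x : Fin k → ℝ, (∫ z : Fin k → ℝ,
        h (b • x + u + c • z) * pd i (pd i' (pd i'' (stdGaussianDensity k))) z)
      * stdGaussianDensity k x| ≤ 32768 * (c / b) ^ 2 := by
  obtain ⟨m, hsum, hm3, hψ⟩ := psd_repr i i' i''
  rw [hψ]
  set a : ℝ := c / b with ha_def
  have ha : 0 < a := div_pos hc0 hb0
  have hbne : b ≠ 0 := ne_of_gt hb0
  have hba : b * a = c := by rw [ha_def]; field_simp
  set ψ : (Fin k → ℝ) → ℝ := prodGm m with hψdef
  set φ : (Fin k → ℝ) → ℝ := stdGaussianDensity k with hφdef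
  have hψ_int : Integrable ψ := integrable_prodGm m hm3
  have hψ_cont : Continuous ψ := continuous_prodGm m
  have hφ_int : Integrable φ := integrable_stdG
  have hφ_cont : Continuous φ := continuous_stdG
  have hφ_nn : ∀ x, 0 ≤ φ x := stdG_nonneg
  set Cψ : ℝ := ∫ z, |ψ z| with hCψdef
  have hCψ_nn : 0 ≤ Cψ := integral_nonneg fun z => abs_nonneg _
  have hCψ_le : Cψ ≤ 32768 := by
    have h1 := integral_abs_prodGm m hm3
    rw [hsum] at h1
    norm_num at h1
    exact h1
  -- bound on the inner integral, uniform in x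
  have hinner_le : ∀ v : Fin k → ℝ, |∫ z, h (v + c • z) * ψ z| ≤ Cψ := by
    intro v
    calc |∫ z, h (v + c • z) * ψ z| ≤ ∫ z, ‖h (v + c • z) * ψ z‖ := by
          rw [← Real.norm_eq_abs]; exact norm_integral_le_integral_norm _
      _ ≤ ∫ z, |ψ z| := by
          apply integral_mono_of_nonneg (Filter.Eventually.of_forall fun z => norm_nonneg _)
            hψ_int.abs
          refine Filter.Eventually.of_forall fun z => ?_
          simp only [Real.norm_eq_abs, abs_mul]
          exact mul_le_of_le_one_left (abs_nonneg _) (hb1 _)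
  rcases le_or_gt a 1 with hA | hA
  · -- hard case: a ≤ 1
    have hc1 : Continuous fun p : (Fin k → ℝ) × (Fin k → ℝ) => b • p.1 + u + c • p.2 := by
      fun_prop
    have hmeas1 : AEStronglyMeasurable
        (fun p : (Fin k → ℝ) × (Fin k → ℝ) => h (b • p.1 + u + c • p.2) * ψ p.2 * φ p.1)
        (volume.prod volume) := by
      refine Measurable.aestronglyMeasurable ?_
      exact ((hh.comp hc1.measurable).mul
        (hψ_cont.measurable.comp measurable_snd)).mul (hφ_cont.measurable.comp measurable_fst)
    have P1 : Integrable
        (fun p : (Fin k → ℝ) × (Fin k → ℝ) => h (b • p.1 + u + c • p.2) * ψ p.2 * φ p.1)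
        (volume.prod volume) := by
      apply (hφ_int.mul_prod hψ_int.abs).mono' hmeas1
      refine Filter.Eventually.of_forall fun p => ?_
      simp only [Real.norm_eq_abs, abs_mul]
      rw [abs_of_nonneg (hφ_nn p.1)]
      calc |h (b • p.1 + u + c • p.2)| * |ψ p.2| * φ p.1 ≤ 1 * |ψ p.2| * φ p.1 :=
            mul_le_mul_of_nonneg_right
              (mul_le_mul_of_nonneg_right (hb1 _) (abs_nonneg _)) (hφ_nn _)
        _ = φ p.1 * |ψ p.2| := by ring
    have e1 : (∫ x, (∫ z, h (b • x + u + c • z) * ψ z) * φ x)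
        = ∫ x, ∫ z, h (b • x + u + c • z) * ψ z * φ x := by
      refine integral_congr_ae (Filter.Eventually.of_forall fun x => ?_)
      beta_reduce
      rw [← MeasureTheory.integral_mul_const]
    have e2 : (∫ x, ∫ z, h (b • x + u + c • z) * ψ z * φ x)
        = ∫ z, ∫ x, h (b • x + u + c • z) * ψ z * φ x :=
      integral_integral_swap (f := fun x z => h (b • x + u + c • z) * ψ z * φ x) P1
    have e3 : ∀ z : Fin k → ℝ, (∫ x, h (b • x + u + c • z) * ψ z * φ x)
        = (∫ y, h (b • y + u) * φ (y - a • z)) * ψ z := by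
      intro z
      have r1 : (fun x => h (b • x + u + c • z) * ψ z * φ x)
          = fun x => (h (b • x + u + c • z) * φ x) * ψ z := by funext x; ring
      rw [r1, MeasureTheory.integral_mul_const]
      congr 1
      have r2 := MeasureTheory.integral_sub_right_eq_self (μ := volume)
        (fun x => h (b • x + u + c • z) * φ x) (a • z)
      rw [← r2]
      refine integral_congr_ae (Filter.Eventually.of_forall fun y => ?_)
      have harg : b • (y - a • z) + u + c • z = b • y + u := by
        rw [smul_sub, smul_smul, hba]
        abel
      simp only [harg]
    have hc2 : Continuous fun p : (Fin k → ℝ) × (Fin k → ℝ) => b • p.2 + u := by fun_prop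
    have hc3 : Continuous fun p : (Fin k → ℝ) × (Fin k → ℝ) => p.2 - a • p.1 := by fun_prop
    have hmeas2 : AEStronglyMeasurable
        (fun p : (Fin k → ℝ) × (Fin k → ℝ) => h (b • p.2 + u) * φ (p.2 - a • p.1) * ψ p.1)
        (volume.prod volume) := by
      refine Measurable.aestronglyMeasurable ?_
      exact ((hh.comp hc2.measurable).mul (hφ_cont.measurable.comp hc3.measurable)).mul
        (hψ_cont.measurable.comp measurable_fst)
    have hslice : ∀ z : Fin k → ℝ,
        Integrable (fun y => h (b • y + u) * φ (y - a • z) * ψ z) := by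
      intro z
      apply ((hφ_int.comp_sub_right (a • z)).mul_const |ψ z|).mono'
      · refine Measurable.aestronglyMeasurable ?_
        have hcy : Continuous fun y : Fin k → ℝ => b • y + u := by fun_prop
        have hcy2 : Continuous fun y : Fin k → ℝ => y - a • z := by fun_prop
        exact ((hh.comp hcy.measurable).mul
          (hφ_cont.measurable.comp hcy2.measurable)).mul measurable_const
      · refine Filter.Eventually.of_forall fun y => ?_
        simp only [Real.norm_eq_abs, abs_mul]
        rw [abs_of_nonneg (hφ_nn _)]
        calc |h (b • y + u)| * φ (y - a • z) * |ψ z| ≤ 1 * φ (y - a • z) * |ψ z| :=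
              mul_le_mul_of_nonneg_right
                (mul_le_mul_of_nonneg_right (hb1 _) (hφ_nn _)) (abs_nonneg _)
          _ = φ (y - a • z) * |ψ z| := by ring
    have hnormint : ∀ z : Fin k → ℝ,
        (∫ y, ‖h (b • y + u) * φ (y - a • z) * ψ z‖) ≤ |ψ z| := by
      intro z
      have step : (∫ y, ‖h (b • y + u) * φ (y - a • z) * ψ z‖)
          ≤ ∫ y, φ (y - a • z) * |ψ z| := by
        apply integral_mono_of_nonneg (Filter.Eventually.of_forall fun y => norm_nonneg _)
          ((hφ_int.comp_sub_right (a • z)).mul_const _)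
        refine Filter.Eventually.of_forall fun y => ?_
        simp only [Real.norm_eq_abs, abs_mul]
        rw [abs_of_nonneg (hφ_nn _)]
        calc |h (b • y + u)| * φ (y - a • z) * |ψ z| ≤ 1 * φ (y - a • z) * |ψ z| :=
              mul_le_mul_of_nonneg_right
                (mul_le_mul_of_nonneg_right (hb1 _) (hφ_nn _)) (abs_nonneg _)
          _ = φ (y - a • z) * |ψ z| := by ring
      rw [MeasureTheory.integral_mul_const,
        MeasureTheory.integral_sub_right_eq_self (μ := volume) φ (a • z), hφdef,
        integral_stdG, one_mul] at step
      exact step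
    have P2 : Integrable (fun p : (Fin k → ℝ) × (Fin k → ℝ) =>
        h (b • p.2 + u) * φ (p.2 - a • p.1) * ψ p.1) (volume.prod volume) := by
      refine (integrable_prod_iff hmeas2).mpr ⟨Filter.Eventually.of_forall fun z => ?_, ?_⟩
      · exact hslice z
      · apply hψ_int.abs.mono' hmeas2.norm.integral_prod_right'
        refine Filter.Eventually.of_forall fun z => ?_
        rw [Real.norm_eq_abs, abs_of_nonneg (integral_nonneg fun y => norm_nonneg _)]
        exact hnormint z
    have e4 : (∫ z, (∫ y, h (b • y + u) * φ (y - a • z)) * ψ z)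
        = ∫ y, ∫ z, h (b • y + u) * φ (y - a • z) * ψ z := by
      have e4a : (∫ z, (∫ y, h (b • y + u) * φ (y - a • z)) * ψ z)
          = ∫ z, ∫ y, h (b • y + u) * φ (y - a • z) * ψ z := by
        refine integral_congr_ae (Filter.Eventually.of_forall fun z => ?_)
        beta_reduce
        rw [← MeasureTheory.integral_mul_const]
      rw [e4a]
      exact integral_integral_swap (f := fun z y => h (b • y + u) * φ (y - a • z) * ψ z) P2
    have e5 : (∫ y, ∫ z, h (b • y + u) * φ (y - a • z) * ψ z)
        = ∫ y, h (b • y + u) * ∫ z, φ (y - a • z) * ψ z := by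
      refine integral_congr_ae (Filter.Eventually.of_forall fun y => ?_)
      beta_reduce
      rw [← MeasureTheory.integral_const_mul]
      refine integral_congr_ae (Filter.Eventually.of_forall fun z => ?_)
      ring
    have e6 : ∀ y : Fin k → ℝ, (∫ z, φ (y - a • z) * ψ z)
        = a ^ 3 * ∫ z, φ z * ψ (y - a • z) := by
      intro y
      have l1 : (fun z : Fin k → ℝ => φ (y - a • z) * ψ z)
          = fun z => ∏ j, (gau (y j - a * z j) * Gm (m j) (z j)) := by
        funext z
        rw [hφdef, hψdef, gauss_prod]
        unfold prodGm
        rw [← Finset.prod_mul_distrib]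
        refine Finset.prod_congr rfl fun j _ => ?_
        congr 2
      have l2 : (fun z : Fin k → ℝ => φ z * ψ (y - a • z))
          = fun z => ∏ j, (gau (z j) * Gm (m j) (y j - a * z j)) := by
        funext z
        rw [hφdef, hψdef, gauss_prod]
        unfold prodGm
        rw [← Finset.prod_mul_distrib]
        refine Finset.prod_congr rfl fun j _ => ?_
        congr 2
      rw [l1, l2,
        MeasureTheory.integral_fintype_prod_volume_eq_prod
          (f := fun j t => gau (y j - a * t) * Gm (m j) t),
        MeasureTheory.integral_fintype_prod_volume_eq_prod
          (f := fun j t => gau t * Gm (m j) (y j - a * t))]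
      have l3 : ∀ j : Fin k, (∫ t, gau (y j - a * t) * Gm (m j) t)
          = a ^ (m j) * ∫ t, gau t * Gm (m j) (y j - a * t) := by
        intro j
        have hk := key_ibp (m j) 0 (by have := hm3 j; omega) a (y j)
        rw [Nat.add_zero] at hk
        rw [← hk]
        refine integral_congr_ae (Filter.Eventually.of_forall fun t => ?_)
        show gau (y j - a * t) * Gm (m j) t = Gm (m j) t * Gm 0 (y j - a * t)
        rw [mul_comm]
        rfl
      rw [Finset.prod_congr rfl fun j _ => l3 j, Finset.prod_mul_distrib,
        Finset.prod_pow_eq_pow_sum, hsum]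
    -- the auxiliary dominating function
    have hWmeas : AEStronglyMeasurable
        (fun p : (Fin k → ℝ) × (Fin k → ℝ) => φ p.2 * |ψ (p.1 - a • p.2)|)
        (volume.prod volume) := by
      refine Continuous.aestronglyMeasurable ?_
      exact (hφ_cont.comp continuous_snd).mul
        ((hψ_cont.comp (continuous_fst.sub (continuous_snd.const_smul a))).abs)
    have PW : Integrable (fun p : (Fin k → ℝ) × (Fin k → ℝ) =>
        φ p.2 * |ψ (p.1 - a • p.2)|) (volume.prod volume) := by
      refine (integrable_prod_iff' hWmeas).mpr ⟨Filter.Eventually.of_forall fun z => ?_, ?_⟩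
      · exact (hψ_int.abs.comp_sub_right (a • z)).const_mul (φ z)
      · have hval : ∀ z : Fin k → ℝ, (∫ y, ‖φ z * |ψ (y - a • z)|‖) = φ z * Cψ := by
          intro z
          have hn : ∀ y : Fin k → ℝ, ‖φ z * |ψ (y - a • z)|‖ = φ z * |ψ (y - a • z)| :=
            fun y => by
              rw [Real.norm_eq_abs, abs_of_nonneg (mul_nonneg (hφ_nn z) (abs_nonneg _))]
          rw [integral_congr_ae (Filter.Eventually.of_forall hn),
            MeasureTheory.integral_const_mul,
            MeasureTheory.integral_sub_right_eq_self (μ := volume)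
              (fun y => |ψ y|) (a • z)]
        refine (hφ_int.mul_const Cψ).congr ?_
        exact Filter.Eventually.of_forall fun z => (hval z).symm
    have hG_int : Integrable (fun y => ∫ z, φ z * |ψ (y - a • z)|) := PW.integral_prod_left
    have hG_val : (∫ y, ∫ z, φ z * |ψ (y - a • z)|) = Cψ := by
      rw [integral_integral_swap (f := fun y z => φ z * |ψ (y - a • z)|) PW]
      have hv : ∀ z : Fin k → ℝ, (∫ y, φ z * |ψ (y - a • z)|) = φ z * Cψ := by
        intro z
        rw [MeasureTheory.integral_const_mul,
          MeasureTheory.integral_sub_right_eq_self (μ := volume) (fun y => |ψ y|) (a • z)]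
      rw [integral_congr_ae (Filter.Eventually.of_forall hv),
        MeasureTheory.integral_mul_const, hφdef, integral_stdG, one_mul]
    -- assemble
    rw [e1, e2, integral_congr_ae (Filter.Eventually.of_forall e3), e4, e5]
    have hgW : ∀ y : Fin k → ℝ,
        |∫ z, φ (y - a • z) * ψ z| ≤ a ^ 3 * ∫ z, φ z * |ψ (y - a • z)| := by
      intro y
      rw [e6 y, abs_mul, abs_of_nonneg (pow_nonneg ha.le 3)]
      apply mul_le_mul_of_nonneg_left _ (pow_nonneg ha.le 3)
      calc |∫ z, φ z * ψ (y - a • z)| ≤ ∫ z, ‖φ z * ψ (y - a • z)‖ := by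
            rw [← Real.norm_eq_abs]; exact norm_integral_le_integral_norm _
        _ = ∫ z, φ z * |ψ (y - a • z)| := by
            refine integral_congr_ae (Filter.Eventually.of_forall fun z => ?_)
            simp only [Real.norm_eq_abs, abs_mul]
            rw [abs_of_nonneg (hφ_nn z)]
    have ha3 : a ^ 3 ≤ a ^ 2 := pow_le_pow_of_le_one ha.le hA (by norm_num)
    calc |∫ y, h (b • y + u) * ∫ z, φ (y - a • z) * ψ z|
        ≤ ∫ y, ‖h (b • y + u) * ∫ z, φ (y - a • z) * ψ z‖ := by
          rw [← Real.norm_eq_abs]; exact norm_integral_le_integral_norm _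
      _ ≤ ∫ y, a ^ 3 * ∫ z, φ z * |ψ (y - a • z)| := by
          apply integral_mono_of_nonneg (Filter.Eventually.of_forall fun y => norm_nonneg _)
            (hG_int.const_mul _)
          refine Filter.Eventually.of_forall fun y => ?_
          simp only [Real.norm_eq_abs, abs_mul]
          calc |h (b • y + u)| * |∫ z, φ (y - a • z) * ψ z|
              ≤ 1 * |∫ z, φ (y - a • z) * ψ z| :=
                mul_le_mul_of_nonneg_right (hb1 _) (abs_nonneg _)
            _ = |∫ z, φ (y - a • z) * ψ z| := one_mul _
            _ ≤ a ^ 3 * ∫ z, φ z * |ψ (y - a • z)| := hgW y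
      _ = a ^ 3 * Cψ := by rw [MeasureTheory.integral_const_mul, hG_val]
      _ ≤ 32768 * a ^ 2 := by nlinarith [pow_nonneg ha.le 3, pow_nonneg ha.le 2]
  · -- easy case: 1 < a
    have step : |∫ x, (∫ z, h (b • x + u + c • z) * ψ z) * φ x| ≤ Cψ := by
      calc |∫ x, (∫ z, h (b • x + u + c • z) * ψ z) * φ x|
          ≤ ∫ x, ‖(∫ z, h (b • x + u + c • z) * ψ z) * φ x‖ := by
            rw [← Real.norm_eq_abs]; exact norm_integral_le_integral_norm _
        _ ≤ ∫ x, Cψ * φ x := by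
            apply integral_mono_of_nonneg
              (Filter.Eventually.of_forall fun x => norm_nonneg _) (hφ_int.const_mul Cψ)
            refine Filter.Eventually.of_forall fun x => ?_
            simp only [Real.norm_eq_abs, abs_mul]
            rw [abs_of_nonneg (hφ_nn x)]
            exact mul_le_mul_of_nonneg_right (hinner_le (b • x + u)) (hφ_nn x)
        _ = Cψ := by rw [MeasureTheory.integral_const_mul, integral_stdG, mul_one]
    calc |∫ x, (∫ z, h (b • x + u + c • z) * ψ z) * φ x| ≤ Cψ := step
      _ ≤ 32768 * a ^ 2 := by nlinarith

theorem double_integral_third_partial_bound :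
    ∃ c₀ : ℝ, 0 < c₀ ∧
      (∀ (k : ℕ) (h : (Fin k → ℝ) → ℝ) (b c : ℝ) (u : Fin k → ℝ) (i i' i'' : Fin k),
        Measurable h → (∀ x, |h x| ≤ 1) → 0 < b → b ≤ 1 → 0 < c →
        |∫ x : Fin k → ℝ, (∫ z : Fin k → ℝ,
              h (b • x + u + c • z) * pd i (pd i' (pd i'' (stdGaussianDensity k))) z)
            * stdGaussianDensity k x|
          ≤ c₀ * k * (c / b) ^ 2) ∧
      (∀ (k : ℕ) (h : (Fin k → ℝ) → ℝ) (n : ℕ) (s : ℝ) (u : Fin k → ℝ)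
          (i i' i'' : Fin k),
        Measurable h → (∀ x, |h x| ≤ 1) → 2 ≤ n → 0 < s →
        |∫ x : Fin k → ℝ, (∫ z : Fin k → ℝ,
              h ((Real.sqrt ((n - 1) / n) * Real.exp (-s)) • x + u
                  + Real.sqrt (1 - Real.exp (-2 * s)) • z)
                * pd i (pd i' (pd i'' (stdGaussianDensity k))) z)
            * stdGaussianDensity k x|
          ≤ c₀ * k * Real.exp (2 * s) * (1 - Real.exp (-2 * s))) := by
  refine ⟨65536, by norm_num, ?_, ?_⟩
  · intro k h b c u i i' i'' hh hb1 hb0 _hble hc0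
    have hk : (1:ℝ) ≤ (k:ℝ) := by
      have hpos : 0 < k := i.pos
      exact_mod_cast hpos
    have hcore := core_bound h b c u i i' i'' hh hb1 hb0 hc0
    have hsq : (0:ℝ) ≤ (c/b)^2 := sq_nonneg _
    nlinarith
  · intro k h n s u i i' i'' hh hb1 hn hs
    have hk : (1:ℝ) ≤ (k:ℝ) := by
      have hpos : 0 < k := i.pos
      exact_mod_cast hpos
    set b : ℝ := Real.sqrt (((n:ℝ) - 1) / n) * Real.exp (-s) with hbdef
    set c : ℝ := Real.sqrt (1 - Real.exp (-2 * s)) with hcdef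
    have hn1 : (1:ℝ) ≤ (n:ℝ) - 1 := by
      have h2 : (2:ℝ) ≤ (n:ℝ) := by exact_mod_cast hn
      linarith
    have hnpos : (0:ℝ) < (n:ℝ) := by linarith
    have hfrac_pos : 0 < ((n:ℝ)-1)/(n:ℝ) := by positivity
    have hfrac_le : ((n:ℝ)-1)/(n:ℝ) ≤ 1 := by rw [div_le_one hnpos]; linarith
    have hb0 : 0 < b := mul_pos (Real.sqrt_pos.mpr hfrac_pos) (Real.exp_pos _)
    have hexp_lt : Real.exp (-2*s) < 1 := by
      rw [Real.exp_lt_one_iff]; linarith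
    have hc0 : 0 < c := Real.sqrt_pos.mpr (by linarith)
    have hcore := core_bound h b c u i i' i'' hh hb1 hb0 hc0
    have hb2 : b^2 = ((n:ℝ)-1)/(n:ℝ) * Real.exp (-2*s) := by
      rw [hbdef, mul_pow, Real.sq_sqrt hfrac_pos.le]
      congr 1
      rw [sq, ← Real.exp_add]
      congr 1
      ring
    have hc2 : c^2 = 1 - Real.exp (-2*s) := Real.sq_sqrt (by linarith)
    have hexp1 : Real.exp (2*s) * Real.exp (-2*s) = 1 := by
      rw [← Real.exp_add]
      norm_num
    have hF : (1:ℝ)/2 ≤ ((n:ℝ)-1)/(n:ℝ) := by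
      rw [le_div_iff₀ hnpos]; linarith
    have key : (c/b)^2 ≤ 2 * Real.exp (2*s) * (1 - Real.exp (-2*s)) := by
      rw [div_pow, hb2, hc2, div_le_iff₀ (by positivity)]
      have h2 : 2 * Real.exp (2*s) * (1 - Real.exp (-2*s))
            * (((n:ℝ)-1)/(n:ℝ) * Real.exp (-2*s))
          = 2 * (1 - Real.exp (-2*s)) * (((n:ℝ)-1)/(n:ℝ))
            * (Real.exp (2*s) * Real.exp (-2*s)) := by ring
      rw [h2, hexp1, mul_one]
      nlinarith [sub_nonneg.mpr hexp_lt.le]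
    have hX : (0:ℝ) ≤ Real.exp (2*s) * (1 - Real.exp (-2*s)) := by
      have := sub_nonneg.mpr hexp_lt.le
      positivity
    nlinarith [hcore, key, hX, hk]
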